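/- Let μ_n be a sequence of positive measures on ℝ absolutely continuous with densities m_n ∈ L¹_loc, converging vaguely to a positive Radon measure μ, and let f_n, f : ℝ × ℝ^M → ℝ^N be strong Carathéodory functions with |f_n(t,x)| ≤ m_n(t) for a.e. t and all x ∈ B_j, such that ∫_t^{t+h} f_n(s,x) ds → ∫_t^{t+h} f(s,x) ds for all rational t, h > 0 and x in a countable dense set D ∩ B_j. Then for every x ∈ D ∩ B_j and all real t and h > 0: |(1/h) ∫_t^{t+h} f(s,x) ds| ≤ μ([t, t+h])/h. -/

import Mathlib

open MeasureTheory Set Metric Filter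

open scoped ENNReal NNReal

private lemma locInt_intInt {E : Type*} [NormedAddCommGroup E] {f : ℝ → E}
    (hf : LocallyIntegrable f) (a b : ℝ) : IntervalIntegrable f volume a b :=
  intervalIntegrable_iff.mpr
    ((hf.integrableOn_isCompact isCompact_uIcc).mono_set Ioc_subset_Icc_self)


/-- If measures with densities `m_n` dominating `|f_n(·,x)|` on `B_j` converge vaguely to a
Radon measure `μ`, and the integrals of `f_n(·,x)` converge to those of `f(·,x)` over rational
intervals for `x` in a countable dense set, then the averages of `f(·,x)` are dominated by
the averages of `μ`. -/
theorem stmt11 (M N j : ℕ)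
    (μn : ℕ → Measure ℝ) (mn : ℕ → ℝ → ℝ) (μ : Measure ℝ) [IsLocallyFiniteMeasure μ]
    (hdensity : ∀ n, μn n = volume.withDensity (fun t => ENNReal.ofReal (mn n t)))
    (hmn : ∀ n, LocallyIntegrable (mn n)) (hmnpos : ∀ n, ∀ t : ℝ, 0 ≤ mn n t)
    (fn : ℕ → ℝ → EuclideanSpace ℝ (Fin M) → EuclideanSpace ℝ (Fin N))
    (f : ℝ → EuclideanSpace ℝ (Fin M) → EuclideanSpace ℝ (Fin N))
    (hSCn : ∀ n, Measurable (Function.uncurry (fn n)) ∧ ∀ᵐ t : ℝ, Continuous (fn n t))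
    (hSC : Measurable (Function.uncurry f) ∧ ∀ᵐ t : ℝ, Continuous (f t))
    (hfint : ∀ x, LocallyIntegrable (fun t => f t x))
    (hbound : ∀ n, ∀ᵐ t : ℝ,
      ∀ x ∈ closedBall (0 : EuclideanSpace ℝ (Fin M)) (j:ℝ), ‖fn n t x‖ ≤ mn n t)
    (D : Set (EuclideanSpace ℝ (Fin M))) (hD : D.Countable) (hdense : Dense D)
    (hvague : ∀ g : ℝ → ℝ, Continuous g → HasCompactSupport g →
      Tendsto (fun n => ∫ t, g t ∂(μn n)) atTop (nhds (∫ t, g t ∂μ)))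
    (hconv : ∀ x ∈ D ∩ closedBall 0 (j:ℝ), ∀ t h : ℚ, 0 < h →
      Tendsto (fun n => ∫ s in (t:ℝ)..((t:ℝ)+(h:ℝ)), fn n s x) atTop
        (nhds (∫ s in (t:ℝ)..((t:ℝ)+(h:ℝ)), f s x))) :
    ∀ x ∈ D ∩ closedBall 0 (j:ℝ), ∀ t h : ℝ, 0 < h →
      ‖(1/h) • ∫ s in t..(t+h), f s x‖ ≤ (μ (Icc t (t+h))).toReal / h := by
  intro x hx t h hpos
  have hxB : x ∈ closedBall (0 : EuclideanSpace ℝ (Fin M)) (j:ℝ) := hx.2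
  -- Key estimate for rational intervals inside a real interval
  have key : ∀ a b : ℝ, ∀ q r : ℚ, (q:ℝ) < (r:ℝ) → a < (q:ℝ) → (r:ℝ) < b →
      ‖∫ s in (q:ℝ)..(r:ℝ), f s x‖ ≤ (μ (Icc a b)).toReal := by
    intro a b q r hqr haq hrb
    have hab : a < b := haq.trans (hqr.trans hrb)
    -- Urysohn function
    obtain ⟨g, hg1, hg0, hgsupp, hg01⟩ :=
      exists_continuous_one_zero_of_isCompact (X := ℝ) (s := Icc (q:ℝ) (r:ℝ))
        (t := (Ioo a b)ᶜ) isCompact_Icc (isOpen_Ioo.isClosed_compl)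
        (disjoint_compl_right_iff_subset.mpr (Icc_subset_Ioo haq hrb))
    -- bound for each n
    have hn : ∀ n, ‖∫ s in (q:ℝ)..(r:ℝ), fn n s x‖ ≤ ∫ s, (g : ℝ → ℝ) s ∂(μn n) := by
      intro n
      have hmeas : Measurable fun s => fn n s x :=
        (hSCn n).1.comp (measurable_id.prodMk measurable_const)
      have hb : ∀ᵐ s : ℝ, ‖fn n s x‖ ≤ mn n s :=
        (hbound n).mono fun s hs => hs x hxB
      have hmnint : IntervalIntegrable (mn n) volume (q:ℝ) (r:ℝ) := locInt_intInt (hmn n) _ _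
      have hfnint : IntervalIntegrable (fun s => fn n s x) volume (q:ℝ) (r:ℝ) := by
        refine (intervalIntegrable_iff.mpr ?_)
        exact (intervalIntegrable_iff.mp hmnint).integrable.mono'
          hmeas.aestronglyMeasurable (ae_restrict_of_ae hb)
      have h1 : ‖∫ s in (q:ℝ)..(r:ℝ), fn n s x‖ ≤ ∫ s in (q:ℝ)..(r:ℝ), ‖fn n s x‖ :=
        intervalIntegral.norm_integral_le_integral_norm hqr.le
      have h2 : (∫ s in (q:ℝ)..(r:ℝ), ‖fn n s x‖) ≤ ∫ s in (q:ℝ)..(r:ℝ), mn n s :=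
        intervalIntegral.integral_mono_ae hqr.le hfnint.norm hmnint hb
      -- compare with g • mn
      have hgmn : Integrable (fun s => (g : ℝ → ℝ) s * mn n s) :=
        by simpa [smul_eq_mul] using
          (hmn n).integrable_smul_left_of_hasCompactSupport g.continuous hgsupp
      have hind : Integrable ((Ioc (q:ℝ) (r:ℝ)).indicator (mn n)) := by
        rw [integrable_indicator_iff measurableSet_Ioc]
        exact (intervalIntegrable_iff.mp hmnint).mono_set (by rw [uIoc_of_le hqr.le])
      have h3 : (∫ s in (q:ℝ)..(r:ℝ), mn n s) ≤ ∫ s, (g : ℝ → ℝ) s * mn n s := by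
        rw [intervalIntegral.integral_of_le hqr.le, ← integral_indicator measurableSet_Ioc]
        refine integral_mono hind hgmn fun s => ?_
        by_cases hs : s ∈ Ioc (q:ℝ) (r:ℝ)
        · rw [indicator_of_mem hs]
          have : (g : ℝ → ℝ) s = 1 := hg1 (Ioc_subset_Icc_self hs)
          rw [this, one_mul]
        · rw [indicator_of_notMem hs]
          exact mul_nonneg (hg01 s).1 (hmnpos n s)
      have h4 : (∫ s, (g : ℝ → ℝ) s * mn n s) = ∫ s, (g : ℝ → ℝ) s ∂(μn n) := by
        rw [hdensity n]
        have hmeas' : AEMeasurable (fun s => (mn n s).toNNReal) volume :=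
          measurable_real_toNNReal.comp_aemeasurable (hmn n).aestronglyMeasurable.aemeasurable
        rw [show (fun s => ENNReal.ofReal (mn n s)) = fun s => ((mn n s).toNNReal : ℝ≥0∞) from rfl,
          integral_withDensity_eq_integral_smul₀ hmeas' (g : ℝ → ℝ)]
        refine integral_congr_ae (Eventually.of_forall fun s => ?_)
        simp [NNReal.smul_def, Real.coe_toNNReal _ (hmnpos n s), mul_comm]
      linarith
    -- pass to the limit
    have hrq : (0 : ℚ) < r - q := by
      have : (q : ℝ) < r := hqr
      exact_mod_cast sub_pos.mpr (by exact_mod_cast this)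
    have hcv := hconv x hx q (r - q) hrq
    have e : (q:ℝ) + ((r - q : ℚ) : ℝ) = (r : ℝ) := by push_cast; ring
    rw [e] at hcv
    have hlim1 : Tendsto (fun n => ‖∫ s in (q:ℝ)..(r:ℝ), fn n s x‖) atTop
        (nhds ‖∫ s in (q:ℝ)..(r:ℝ), f s x‖) := hcv.norm
    have hlim2 := hvague (g : ℝ → ℝ) g.continuous hgsupp
    have hle : ‖∫ s in (q:ℝ)..(r:ℝ), f s x‖ ≤ ∫ s, (g : ℝ → ℝ) s ∂μ :=
      le_of_tendsto_of_tendsto' hlim1 hlim2 hn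
    -- ∫ g dμ ≤ μ (Icc a b)
    have hsub : ∀ s, s ∉ Icc a b → (g : ℝ → ℝ) s = 0 := fun s hs =>
      hg0 (fun hmem => hs (Ioo_subset_Icc_self hmem))
    have hgint : IntegrableOn (g : ℝ → ℝ) (Icc a b) μ :=
      g.continuous.continuousOn.integrableOn_compact isCompact_Icc
    have h5 : (∫ s, (g : ℝ → ℝ) s ∂μ) ≤ (μ (Icc a b)).toReal := by
      have : (g : ℝ → ℝ) = (Icc a b).indicator (g : ℝ → ℝ) :=
        (indicator_eq_self.mpr ((Function.support_subset_iff').mpr hsub)).symm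
      rw [this, integral_indicator measurableSet_Icc]
      calc (∫ s in Icc a b, (g : ℝ → ℝ) s ∂μ) ≤ ∫ _ in Icc a b, (1:ℝ) ∂μ := by
            refine setIntegral_mono_on hgint ((integrableOn_const_iff (C := (1:ℝ))).mpr ?_) measurableSet_Icc
              fun s _ => (hg01 s).2
            exact Or.inr (isCompact_Icc.measure_lt_top)
        _ = (μ (Icc a b)).toReal := by simp; rfl
    linarith
  -- Step B: for every ε > 0
  have main : ∀ ε : ℝ, 0 < ε →
      ‖∫ s in t..(t+h), f s x‖ ≤ (μ (Icc (t - ε) (t + h + ε))).toReal := by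
    intro ε hε
    have hq : ∀ k : ℕ, ∃ q : ℚ, max (t - ε) (t - 1/((k:ℝ)+1)) < (q:ℝ) ∧ (q:ℝ) < t := by
      intro k
      have h1 : max (t - ε) (t - 1/((k:ℝ)+1)) < t :=
        max_lt (by linarith) (by
          have : 0 < 1/((k:ℝ)+1) := by positivity
          linarith)
      exact exists_rat_btwn h1
    have hr : ∀ k : ℕ, ∃ r : ℚ, (t+h) < (r:ℝ) ∧ (r:ℝ) < min (t + h + ε) (t + h + 1/((k:ℝ)+1)) := by
      intro k
      have h1 : t + h < min (t + h + ε) (t + h + 1/((k:ℝ)+1)) :=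
        lt_min (by linarith) (by
          have : 0 < 1/((k:ℝ)+1) := by positivity
          linarith)
      exact exists_rat_btwn h1
    choose q hq1 hq2 using hq
    choose r hr1 hr2 using hr
    have hbnd : ∀ k : ℕ, ‖∫ s in ((q k):ℝ)..((r k):ℝ), f s x‖
        ≤ (μ (Icc (t - ε) (t + h + ε))).toReal := by
      intro k
      refine key (t - ε) (t + h + ε) (q k) (r k) ?_ ?_ ?_
      · exact (hq2 k).trans (lt_of_le_of_lt (by linarith) (hr1 k))
      · exact lt_of_le_of_lt (le_max_left _ _) (hq1 k)
      · exact (hr2 k).trans_le (min_le_left _ _)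
    -- limits of endpoints
    have hqlim : Tendsto (fun k : ℕ => ((q k : ℝ))) atTop (nhds t) := by
      have hlow : Tendsto (fun k : ℕ => t - 1/((k:ℝ)+1)) atTop (nhds t) := by
        have := tendsto_one_div_add_atTop_nhds_zero_nat (𝕜 := ℝ)
        have h := tendsto_const_nhds (x := t) (f := atTop (α := ℕ)) |>.sub this
        simpa using h
      refine tendsto_of_tendsto_of_tendsto_of_le_of_le hlow tendsto_const_nhds
        (fun k => ((le_max_right _ _).trans (hq1 k).le)) (fun k => (hq2 k).le)
    have hrlim : Tendsto (fun k : ℕ => ((r k : ℝ))) atTop (nhds (t+h)) := by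
      have hup : Tendsto (fun k : ℕ => t + h + 1/((k:ℝ)+1)) atTop (nhds (t+h)) := by
        have := tendsto_one_div_add_atTop_nhds_zero_nat (𝕜 := ℝ)
        have h := tendsto_const_nhds (x := t+h) (f := atTop (α := ℕ)) |>.add this
        simpa using h
      refine tendsto_of_tendsto_of_tendsto_of_le_of_le tendsto_const_nhds hup
        (fun k => (hr1 k).le) (fun k => ((hr2 k).trans_le (min_le_right _ _)).le)
    -- continuity of the primitive
    have hint : ∀ a b : ℝ, IntervalIntegrable (fun s => f s x) volume a b :=
      fun a b => locInt_intInt (hfint x) a b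
    have hF : Continuous (fun u : ℝ => ∫ s in (0:ℝ)..u, f s x) :=
      intervalIntegral.continuous_primitive hint 0
    have hFeq : ∀ u v : ℝ, (∫ s in u..v, f s x)
        = (∫ s in (0:ℝ)..v, f s x) - (∫ s in (0:ℝ)..u, f s x) := fun u v =>
      (intervalIntegral.integral_interval_sub_left (hint 0 v) (hint 0 u)).symm
    have hlim : Tendsto (fun k : ℕ => ∫ s in ((q k):ℝ)..((r k):ℝ), f s x) atTop
        (nhds (∫ s in t..(t+h), f s x)) := by
      have h1 : (fun k : ℕ => ∫ s in ((q k):ℝ)..((r k):ℝ), f s x)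
          = fun k => (∫ s in (0:ℝ)..((r k):ℝ), f s x) - ∫ s in (0:ℝ)..((q k):ℝ), f s x :=
        funext fun k => hFeq _ _
      rw [h1, hFeq t (t+h)]
      exact ((hF.tendsto (t+h)).comp hrlim).sub ((hF.tendsto t).comp hqlim)
    exact le_of_tendsto' hlim.norm hbnd
  -- Step C: shrink ε
  have hshrink : Tendsto (fun k : ℕ =>
      (μ (Icc (t - 1/((k:ℝ)+1)) (t + h + 1/((k:ℝ)+1)))).toReal) atTop
      (nhds ((μ (Icc t (t+h))).toReal)) := by
    have hmeas : ∀ k : ℕ, NullMeasurableSet (Icc (t - 1/((k:ℝ)+1)) (t + h + 1/((k:ℝ)+1))) μ :=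
      fun k => measurableSet_Icc.nullMeasurableSet
    have hanti : Antitone (fun k : ℕ => Icc (t - 1/((k:ℝ)+1)) (t + h + 1/((k:ℝ)+1))) := by
      intro k l hkl
      have hkl' : (k:ℝ) ≤ (l:ℝ) := Nat.cast_le.mpr hkl
      have h1 : 1/((l:ℝ)+1) ≤ 1/((k:ℝ)+1) :=
        one_div_le_one_div_of_le (by positivity) (by linarith)
      exact Icc_subset_Icc (by linarith) (by linarith)
    have hiInter : (⋂ k : ℕ, Icc (t - 1/((k:ℝ)+1)) (t + h + 1/((k:ℝ)+1))) = Icc t (t+h) := by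
      ext s
      simp only [mem_iInter, mem_Icc]
      constructor
      · intro hs
        constructor
        · by_contra hlt
          push_neg at hlt
          obtain ⟨k, hk⟩ := exists_nat_one_div_lt (sub_pos.mpr hlt)
          have := (hs k).1
          have hk' : 1/((k:ℝ)+1) < t - s := hk
          linarith
        · by_contra hlt
          push_neg at hlt
          obtain ⟨k, hk⟩ := exists_nat_one_div_lt (sub_pos.mpr hlt)
          have := (hs k).2
          have hk' : 1/((k:ℝ)+1) < s - (t+h) := hk
          linarith
      · intro hs k
        have : 0 < 1/((k:ℝ)+1) := by positivity
        exact ⟨by linarith [hs.1], by linarith [hs.2]⟩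
    have h0 : μ (Icc (t - 1/(((0:ℕ):ℝ)+1)) (t + h + 1/(((0:ℕ):ℝ)+1))) ≠ ∞ :=
      isCompact_Icc.measure_lt_top.ne
    have htendsto := tendsto_measure_iInter_atTop (μ := μ) hmeas hanti ⟨0, h0⟩
    rw [hiInter] at htendsto
    refine (ENNReal.tendsto_toReal ?_).comp htendsto
    refine ((measure_mono (Icc_subset_Icc ?_ ?_)).trans_lt (lt_top_iff_ne_top.mpr h0)).ne
    · norm_num
    · norm_num
  have hfinal : ‖∫ s in t..(t+h), f s x‖ ≤ (μ (Icc t (t+h))).toReal := by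
    refine ge_of_tendsto' hshrink fun k => ?_
    exact main (1/((k:ℝ)+1)) (by positivity)
  rw [norm_smul, Real.norm_eq_abs, abs_of_pos (by positivity : (0:ℝ) < 1/h), one_div,
    inv_mul_eq_div]
  gcongr
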